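/- Let α ∈ Q_{−1}(2k) have Frobenius coordinates (a_1,...,a_u; a_1+1,...,a_u+1) and β ∈ Q_{−1}(2(k−1)) have Frobenius coordinates (b_1,...,b_v; b_1+1,...,b_v+1). Then β ⊆ α and the skew diagram α/β does not consist of two horizontally adjacent boxes if and only if either (u = v and there is an index t with a_i = b_i for all i ≠ t and a_t = b_t + 1), or (u = v + 1, a_i = b_i for 1 ≤ i ≤ v, and a_u = 1). -/

import Mathlib

/-- A Young diagram is in `Q₋₁` (of its size) if for every diagonal box `(i,i)`
the leg length exceeds the arm length by exactly one. -/
def IsQneg1 (μ : YoungDiagram) : Prop :=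
  ∀ i : ℕ, (i, i) ∈ μ → μ.colLen i = μ.rowLen i + 1

/-- The number `u` of diagonal boxes of a Young diagram. -/
def diagCard (μ : YoungDiagram) : ℕ :=
  ((Finset.range μ.card).filter (fun i => (i, i) ∈ μ)).card

/-- The Frobenius `a`-sequence: `aᵢ` is the arm length of the diagonal box `(i,i)`
plus one (rows and the sequence indexed from `0`). -/
def aSeq (μ : YoungDiagram) (i : ℕ) : ℕ := μ.rowLen i - i

namespace Stmt3Aux

lemma mem_diag_iff (μ : YoungDiagram) (i : ℕ) : (i, i) ∈ μ ↔ i < diagCard μ := by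
  classical
  set S := (Finset.range μ.card).filter (fun i => (i, i) ∈ μ) with hS
  have hScard : diagCard μ = S.card := rfl
  have hdc : ∀ {a b : ℕ}, a ≤ b → b ∈ S → a ∈ S := by
    intro a b hab hb
    simp only [hS, Finset.mem_filter, Finset.mem_range] at hb ⊢
    exact ⟨lt_of_le_of_lt hab hb.1, μ.up_left_mem hab hab hb.2⟩
  have hmemS : ∀ i : ℕ, (i, i) ∈ μ → i ∈ S := by
    intro i hi
    simp only [hS, Finset.mem_filter, Finset.mem_range]
    refine ⟨?_, hi⟩
    have hcard : (Finset.range (i + 1)).card ≤ μ.card := by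
      apply Finset.card_le_card_of_injOn (fun j => (j, j))
      · intro j hj
        simp only [Finset.mem_coe, Finset.mem_range] at hj
        exact μ.up_left_mem (Nat.le_of_lt_succ hj) (Nat.le_of_lt_succ hj) hi
      · intro a _ b _ h
        exact congrArg Prod.fst h
    simpa using hcard
  constructor
  · intro hi
    have hsub : Finset.range (i + 1) ⊆ S := by
      intro j hj
      simp only [Finset.mem_range] at hj
      exact hmemS j (μ.up_left_mem (Nat.le_of_lt_succ hj) (Nat.le_of_lt_succ hj) hi)
    have := Finset.card_le_card hsub
    simp only [Finset.card_range] at this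
    omega
  · intro hi
    by_contra hmem
    have hsub : S ⊆ Finset.range i := by
      intro j hj
      simp only [Finset.mem_range]
      by_contra hji
      have : i ∈ S := hdc (Nat.le_of_not_lt hji) hj
      simp only [hS, Finset.mem_filter] at this
      exact hmem this.2
    have := Finset.card_le_card hsub
    simp only [Finset.card_range] at this
    omega

lemma rowLen_eq (μ : YoungDiagram) {i : ℕ} (hi : i < diagCard μ) :
    μ.rowLen i = i + aSeq μ i := by
  have h : i < μ.rowLen i := YoungDiagram.mem_iff_lt_rowLen.mp ((mem_diag_iff μ i).mpr hi)
  unfold aSeq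
  omega

lemma aSeq_pos (μ : YoungDiagram) {i : ℕ} (hi : i < diagCard μ) : 1 ≤ aSeq μ i := by
  have h : i < μ.rowLen i := YoungDiagram.mem_iff_lt_rowLen.mp ((mem_diag_iff μ i).mpr hi)
  unfold aSeq
  omega

lemma aSeq_lt (μ : YoungDiagram) {i : ℕ} (hi : i + 1 < diagCard μ) :
    aSeq μ (i + 1) < aSeq μ i := by
  have h1 := rowLen_eq μ hi
  have h2 := rowLen_eq μ (lt_trans (Nat.lt_succ_self i) hi)
  have h3 := μ.rowLen_anti i (i + 1) (Nat.le_succ i)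
  omega

lemma mem_charac {μ : YoungDiagram} (hQ : IsQneg1 μ) (i j : ℕ) :
    (i, j) ∈ μ ↔ (i ≤ j ∧ i < diagCard μ ∧ j < i + aSeq μ i) ∨
      (j < i ∧ j < diagCard μ ∧ i < j + aSeq μ j + 1) := by
  rcases le_or_gt i j with hij | hij
  · constructor
    · intro h
      have hd : (i, i) ∈ μ := μ.up_left_mem le_rfl hij h
      have hu := (mem_diag_iff μ i).mp hd
      have hlt := YoungDiagram.mem_iff_lt_rowLen.mp h
      rw [rowLen_eq μ hu] at hlt
      exact Or.inl ⟨hij, hu, hlt⟩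
    · rintro (⟨_, hu, hj⟩ | ⟨h1, _, _⟩)
      · rw [YoungDiagram.mem_iff_lt_rowLen, rowLen_eq μ hu]; exact hj
      · omega
  · constructor
    · intro h
      have hd : (j, j) ∈ μ := μ.up_left_mem (le_of_lt hij) le_rfl h
      have hu := (mem_diag_iff μ j).mp hd
      have hlt := YoungDiagram.mem_iff_lt_colLen.mp h
      rw [hQ j hd, rowLen_eq μ hu] at hlt
      exact Or.inr ⟨hij, hu, hlt⟩
    · rintro (⟨h1, _, _⟩ | ⟨_, hu, hji⟩)
      · omega
      · have hd := (mem_diag_iff μ j).mpr hu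
        rw [YoungDiagram.mem_iff_lt_colLen, hQ j hd, rowLen_eq μ hu]
        exact hji

lemma three_absurd {s : Finset (ℕ × ℕ)} (hs : s.card = 2) {c1 c2 c3 : ℕ × ℕ}
    (h1 : c1 ∈ s) (h2 : c2 ∈ s) (h3 : c3 ∈ s)
    (h12 : c1 ≠ c2) (h13 : c1 ≠ c3) (h23 : c2 ≠ c3) : False := by
  have hsub : ({c1, c2, c3} : Finset (ℕ × ℕ)) ⊆ s := by
    intro x hx
    simp only [Finset.mem_insert, Finset.mem_singleton] at hx
    rcases hx with rfl | rfl | rfl <;> assumption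
  have h := Finset.card_le_card hsub
  rw [hs, Finset.card_insert_of_notMem (by simp [h12, h13]),
    Finset.card_insert_of_notMem (by simp [h23]), Finset.card_singleton] at h
  omega

end Stmt3Aux

open Stmt3Aux in
/-- for `α ∈ Q₋₁(2k)` and `β ∈ Q₋₁(2(k-1))`, one has `β ⊆ α` with the
two boxes of `α/β` not horizontally adjacent if and only if, in Frobenius
coordinates, either the `a`-sequences agree except one entry increases by `1`,
or the `a`-sequence of `α` is that of `β` with an extra final entry `1`. -/
theorem stmt3 (k : ℕ) (hk : 1 ≤ k) (α β : YoungDiagram)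
    (hQα : IsQneg1 α) (hQβ : IsQneg1 β)
    (hα : α.card = 2 * k) (hβ : β.card = 2 * (k - 1)) :
    (β ≤ α ∧ ¬ ∃ i j : ℕ, α.cells \ β.cells = {(i, j), (i, j + 1)}) ↔
    ((diagCard α = diagCard β ∧ ∃ t < diagCard α,
        aSeq α t = aSeq β t + 1 ∧ ∀ i < diagCard α, i ≠ t → aSeq α i = aSeq β i) ∨
     (diagCard α = diagCard β + 1 ∧ (∀ i < diagCard β, aSeq α i = aSeq β i) ∧
        aSeq α (diagCard β) = 1)) := by
  set u := diagCard α with hu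
  set v := diagCard β with hv
  set a := aSeq α with ha
  set b := aSeq β with hb
  have hmα : ∀ i j : ℕ, (i, j) ∈ α ↔
      (i ≤ j ∧ i < u ∧ j < i + a i) ∨ (j < i ∧ j < u ∧ i < j + a j + 1) := fun i j =>
    mem_charac hQα i j
  have hmβ : ∀ i j : ℕ, (i, j) ∈ β ↔
      (i ≤ j ∧ i < v ∧ j < i + b i) ∨ (j < i ∧ j < v ∧ i < j + b j + 1) := fun i j =>
    mem_charac hQβ i j
  have hdiff : ∀ i j : ℕ, (i, j) ∈ α.cells \ β.cells ↔ ((i, j) ∈ α ∧ (i, j) ∉ β) := by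
    intro i j
    simp [Finset.mem_sdiff]
  constructor
  · rintro ⟨hle, -⟩
    have hsub : β.cells ⊆ α.cells := hle
    have hcard : (α.cells \ β.cells).card = 2 := by
      rw [Finset.card_sdiff_of_subset hsub]
      have : β.cells.card = 2 * (k - 1) := hβ
      have : α.cells.card = 2 * k := hα
      omega
    have hvu : v ≤ u := by
      by_contra h
      push_neg at h
      have h1 : (u, u) ∈ β := (mem_diag_iff β u).mpr h
      have h2 : (u, u) ∈ α := hsub h1
      exact absurd ((mem_diag_iff α u).mp h2) (lt_irrefl u)
    have hab : ∀ i, i < v → b i ≤ a i := by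
      intro i hi
      have hbi : 1 ≤ b i := aSeq_pos β hi
      have hc : (i, i + (b i - 1)) ∈ β := (hmβ _ _).mpr (Or.inl ⟨by omega, hi, by omega⟩)
      have hc' : (i, i + (b i - 1)) ∈ α := hsub hc
      rcases (hmα _ _).mp hc' with ⟨_, _, h3⟩ | ⟨h1, _, _⟩ <;> omega
    -- rule out u ≥ v + 2
    have huv2 : u ≤ v + 1 := by
      by_contra h
      push_neg at h
      have hvu1 : v + 1 < u := h
      have hav1 : 1 ≤ a (v + 1) := aSeq_pos α hvu1
      have hav : a (v + 1) < a v := aSeq_lt α hvu1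
      have c1 : (v, v) ∈ α.cells \ β.cells := by
        rw [hdiff]
        constructor
        · exact (hmα _ _).mpr (Or.inl ⟨le_rfl, by omega, by omega⟩)
        · rw [hmβ]; rintro (⟨_, h2, _⟩ | ⟨h1, _, _⟩) <;> omega
      have c2 : (v + 1, v + 1) ∈ α.cells \ β.cells := by
        rw [hdiff]
        constructor
        · have : 1 ≤ a (v + 1) := hav1
          exact (hmα _ _).mpr (Or.inl ⟨le_rfl, by omega, by omega⟩)
        · rw [hmβ]; rintro (⟨_, h2, _⟩ | ⟨h1, _, _⟩) <;> omega
      have c3 : (v, v + 1) ∈ α.cells \ β.cells := by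
        rw [hdiff]
        constructor
        · exact (hmα _ _).mpr (Or.inl ⟨by omega, by omega, by omega⟩)
        · rw [hmβ]; rintro (⟨_, h2, _⟩ | ⟨h1, h2, _⟩) <;> omega
      exact three_absurd hcard c1 c2 c3 (by simp) (by simp) (by simp)
    rcases Nat.lt_or_ge v u with hcase | hcase
    · -- u = v + 1
      have huv : u = v + 1 := by omega
      right
      have hav1 : 1 ≤ a v := aSeq_pos α (by omega)
      have hav : a v = 1 := by
        by_contra hne
        have hav2 : 2 ≤ a v := by omega
        have c1 : (v, v) ∈ α.cells \ β.cells := by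
          rw [hdiff]
          constructor
          · exact (hmα _ _).mpr (Or.inl ⟨le_rfl, by omega, by omega⟩)
          · rw [hmβ]; rintro (⟨_, h2, _⟩ | ⟨h1, _, _⟩) <;> omega
        have c2 : (v, v + 1) ∈ α.cells \ β.cells := by
          rw [hdiff]
          constructor
          · exact (hmα _ _).mpr (Or.inl ⟨by omega, by omega, by omega⟩)
          · rw [hmβ]; rintro (⟨_, h2, _⟩ | ⟨h1, _, _⟩) <;> omega
        have c3 : (v + 1, v) ∈ α.cells \ β.cells := by
          rw [hdiff]
          constructor
          · exact (hmα _ _).mpr (Or.inr ⟨by omega, by omega, by omega⟩)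
          · rw [hmβ]; rintro (⟨h1, _, _⟩ | ⟨_, h2, _⟩) <;> omega
        exact three_absurd hcard c1 c2 c3 (by simp) (by simp) (by simp)
      refine ⟨huv, ?_, hav⟩
      intro t ht
      by_contra hne
      have htv : b t < a t := by
        have := hab t ht
        omega
      have hbt : 1 ≤ b t := aSeq_pos β ht
      have c1 : (v, v) ∈ α.cells \ β.cells := by
        rw [hdiff]
        constructor
        · exact (hmα _ _).mpr (Or.inl ⟨le_rfl, by omega, by omega⟩)
        · rw [hmβ]; rintro (⟨_, h2, _⟩ | ⟨h1, _, _⟩) <;> omega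
      have c2 : (v + 1, v) ∈ α.cells \ β.cells := by
        rw [hdiff]
        constructor
        · exact (hmα _ _).mpr (Or.inr ⟨by omega, by omega, by omega⟩)
        · rw [hmβ]; rintro (⟨h1, _, _⟩ | ⟨_, h2, _⟩) <;> omega
      have c3 : (t, t + b t) ∈ α.cells \ β.cells := by
        rw [hdiff]
        constructor
        · exact (hmα _ _).mpr (Or.inl ⟨by omega, by omega, by omega⟩)
        · rw [hmβ]; rintro (⟨_, _, h3⟩ | ⟨h1, _, _⟩) <;> omega
      exact three_absurd hcard c1 c2 c3 (by simp) (by simp [Prod.ext_iff]; omega)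
        (by simp [Prod.ext_iff]; omega)
    · -- u = v
      have huv : u = v := by omega
      left
      -- there exists a cell in the difference
      have hne : (α.cells \ β.cells).Nonempty := by
        rw [← Finset.card_pos, hcard]; omega
      obtain ⟨⟨i0, j0⟩, hc0⟩ := hne
      rw [hdiff] at hc0
      obtain ⟨hc0α, hc0β⟩ := hc0
      have hex : ∃ t, t < v ∧ b t < a t := by
        rcases (hmα _ _).mp hc0α with ⟨h1, h2, h3⟩ | ⟨h1, h2, h3⟩
        · refine ⟨i0, by omega, ?_⟩
          by_contra hba
          exact hc0β ((hmβ _ _).mpr (Or.inl ⟨h1, by omega, by omega⟩))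
        · refine ⟨j0, by omega, ?_⟩
          by_contra hba
          exact hc0β ((hmβ _ _).mpr (Or.inr ⟨h1, by omega, by omega⟩))
      obtain ⟨t, htv, htlt⟩ := hex
      have hbt : 1 ≤ b t := aSeq_pos β htv
      have cA : (t, t + b t) ∈ α.cells \ β.cells := by
        rw [hdiff]
        constructor
        · exact (hmα _ _).mpr (Or.inl ⟨by omega, by omega, by omega⟩)
        · rw [hmβ]; rintro (⟨_, _, h3⟩ | ⟨h1, _, _⟩) <;> omega
      have cB : (t + b t + 1, t) ∈ α.cells \ β.cells := by
        rw [hdiff]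
        constructor
        · exact (hmα _ _).mpr (Or.inr ⟨by omega, by omega, by omega⟩)
        · rw [hmβ]; rintro (⟨h1, _, _⟩ | ⟨_, _, h3⟩) <;> omega
      have hat : a t = b t + 1 := by
        by_contra hne2
        have hat2 : b t + 2 ≤ a t := by omega
        have cC : (t, t + b t + 1) ∈ α.cells \ β.cells := by
          rw [hdiff]
          constructor
          · exact (hmα _ _).mpr (Or.inl ⟨by omega, by omega, by omega⟩)
          · rw [hmβ]; rintro (⟨_, _, h3⟩ | ⟨h1, _, _⟩) <;> omega
        exact three_absurd hcard cA cC cB (by simp) (by simp [Prod.ext_iff]; omega)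
          (by simp [Prod.ext_iff]; omega)
      refine ⟨huv, t, by omega, hat, ?_⟩
      intro s hs hst
      by_contra hne2
      have hslt : b s < a s := by
        have := hab s (by omega)
        omega
      have hbs : 1 ≤ b s := aSeq_pos β (by omega)
      have cC : (s, s + b s) ∈ α.cells \ β.cells := by
        rw [hdiff]
        constructor
        · exact (hmα _ _).mpr (Or.inl ⟨by omega, by omega, by omega⟩)
        · rw [hmβ]; rintro (⟨_, _, h3⟩ | ⟨h1, _, _⟩) <;> omega
      exact three_absurd hcard cA cB cC (by simp [Prod.ext_iff]; omega)
        (by simp [Prod.ext_iff]; omega) (by simp [Prod.ext_iff]; omega)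
  · intro hrhs
    -- common facts: v ≤ u and pointwise b ≤ a
    have hfacts : v ≤ u ∧ (∀ i, i < v → b i ≤ a i) := by
      rcases hrhs with ⟨huv, t, ht, hat, hother⟩ | ⟨huv, heq, hav⟩
      · refine ⟨le_of_eq huv.symm, ?_⟩
        intro i hi
        by_cases hit : i = t
        · subst hit; omega
        · have := hother i (by omega) hit
          omega
      · refine ⟨by omega, ?_⟩
        intro i hi
        have := heq i hi
        omega
    obtain ⟨hvu, hab⟩ := hfacts
    have hle : β ≤ α := by
      intro c hc
      obtain ⟨i, j⟩ := c
      rcases (hmβ i j).mp hc with ⟨h1, h2, h3⟩ | ⟨h1, h2, h3⟩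
      · have := hab i h2
        exact (hmα i j).mpr (Or.inl ⟨h1, by omega, by omega⟩)
      · have := hab j h2
        exact (hmα i j).mpr (Or.inr ⟨h1, by omega, by omega⟩)
    refine ⟨hle, ?_⟩
    rintro ⟨i, j, hset⟩
    rcases hrhs with ⟨huv, t, ht, hat, hother⟩ | ⟨huv, heq, hav⟩
    · have htv : t < v := by omega
      have hbt : 1 ≤ b t := aSeq_pos β htv
      have c1 : (t, t + b t) ∈ α.cells \ β.cells := by
        rw [hdiff]
        constructor
        · exact (hmα _ _).mpr (Or.inl ⟨by omega, by omega, by omega⟩)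
        · rw [hmβ]; rintro (⟨_, _, h3⟩ | ⟨h1, _, _⟩) <;> omega
      have c2 : (t + b t + 1, t) ∈ α.cells \ β.cells := by
        rw [hdiff]
        constructor
        · exact (hmα _ _).mpr (Or.inr ⟨by omega, by omega, by omega⟩)
        · rw [hmβ]; rintro (⟨h1, _, _⟩ | ⟨_, _, h3⟩) <;> omega
      rw [hset] at c1 c2
      simp only [Finset.mem_insert, Finset.mem_singleton, Prod.mk.injEq] at c1 c2
      omega
    · have hav1 : 1 ≤ a v := by omega
      have c1 : (v, v) ∈ α.cells \ β.cells := by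
        rw [hdiff]
        constructor
        · exact (hmα _ _).mpr (Or.inl ⟨le_rfl, by omega, by omega⟩)
        · rw [hmβ]; rintro (⟨_, h2, _⟩ | ⟨h1, _, _⟩) <;> omega
      have c2 : (v + 1, v) ∈ α.cells \ β.cells := by
        rw [hdiff]
        constructor
        · exact (hmα _ _).mpr (Or.inr ⟨by omega, by omega, by omega⟩)
        · rw [hmβ]; rintro (⟨h1, _, _⟩ | ⟨_, h2, _⟩) <;> omega
      rw [hset] at c1 c2
      simp only [Finset.mem_insert, Finset.mem_singleton, Prod.mk.injEq] at c1 c2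
      omega
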